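/- arXiv:2406.06522 — 3 statements merged into one kernel-verified Lean document; each statement's English description precedes it below -/
import Mathlib

section
/- For each κ ∈ (0,8) with cos(4π/κ) > 0, there exists a unique z ∈ (0,1) such that ₂F₁(4/κ, 12/κ−1, 8/κ; z) = 2cos(4π/κ) · ₂F₁(4/κ, 12/κ−1, 8/κ; 1−z). -/
/-- Rising factorial (Pochhammer symbol) `(q)ₙ = q(q+1)⋯(q+n−1)`. -/
noncomputable def risingFac (q : ℝ) (n : ℕ) : ℝ := ∏ i ∈ Finset.range n, (q + (i : ℝ))

/-- Gauss hypergeometric function `₂F₁(a,b,c;z)`, defined as the sum of its power series. -/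
noncomputable def hyp2F1 (a b c z : ℝ) : ℝ :=
  ∑' n : ℕ, risingFac a n * risingFac b n / (risingFac c n * (Nat.factorial n : ℝ)) * z ^ n

/-- Conformal weight `h(κ) = (6−κ)/(2κ)`. -/
noncomputable def hParam (κ : ℝ) : ℝ := (6 - κ) / (2 * κ)

/-- Loop fugacity `ν(κ) = −2cos(4π/κ)`. -/
noncomputable def nuParam (κ : ℝ) : ℝ := -2 * Real.cos (4 * Real.pi / κ)

/-- Cross-ratio `χ = ((x₂−x₁)(x₄−x₃))/((x₃−x₁)(x₄−x₂))`. -/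
noncomputable def crossRatio (x₁ x₂ x₃ x₄ : ℝ) : ℝ :=
  ((x₂ - x₁) * (x₄ - x₃)) / ((x₃ - x₁) * (x₄ - x₂))

/-- Pure partition function `Z_a^(κ)` of multiple SLE_κ (N = 2). -/
noncomputable def Za (κ x₁ x₂ x₃ x₄ : ℝ) : ℝ :=
  (x₂ - x₁) ^ (-(2 * hParam κ)) * (x₄ - x₃) ^ (-(2 * hParam κ)) *
    (1 - crossRatio x₁ x₂ x₃ x₄) ^ (2 / κ) *
    (hyp2F1 (4/κ) (1 - 4/κ) (8/κ) (1 - crossRatio x₁ x₂ x₃ x₄) /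
      hyp2F1 (4/κ) (1 - 4/κ) (8/κ) 1)

/-- Pure partition function `Z_b^(κ)` of multiple SLE_κ (N = 2). -/
noncomputable def Zb (κ x₁ x₂ x₃ x₄ : ℝ) : ℝ :=
  (x₄ - x₁) ^ (-(2 * hParam κ)) * (x₃ - x₂) ^ (-(2 * hParam κ)) *
    (crossRatio x₁ x₂ x₃ x₄) ^ (2 / κ) *
    (hyp2F1 (4/κ) (1 - 4/κ) (8/κ) (crossRatio x₁ x₂ x₃ x₄) /
      hyp2F1 (4/κ) (1 - 4/κ) (8/κ) 1)

/-- The fused three-point function `Z₃^(κ)(ξ,x₃,x₄)`. -/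
noncomputable def Z3 (κ ξ x₃ x₄ : ℝ) : ℝ :=
  (x₄ - x₃) ^ (2/κ) * (x₃ - ξ) ^ (1 - 8/κ) * (x₄ - ξ) ^ (1 - 8/κ) /
    hyp2F1 (4/κ) (1 - 4/κ) (8/κ) 1

open Filter Finset

lemma quad_ev (d e f : ℝ) (hd : 0 < d) : ∀ᶠ n : ℕ in atTop, 0 ≤ d*(n:ℝ)^2+e*(n:ℝ)+f := by
  obtain ⟨N, hN⟩ := exists_nat_ge ((|e|+|f|+d)/d)
  filter_upwards [eventually_ge_atTop N] with n hn
  have h1 : ((|e|+|f|+d)/d) ≤ (n:ℝ) := le_trans hN (by exact_mod_cast hn)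
  rw [div_le_iff₀ hd] at h1
  have h3 : (1:ℝ) ≤ n := by nlinarith [abs_nonneg e, abs_nonneg f]
  nlinarith [neg_abs_le e, neg_abs_le f, abs_nonneg f, sq_nonneg ((n:ℝ)-1)]

noncomputable def hcoef (a b c : ℝ) (n : ℕ) : ℝ :=
  risingFac a n * risingFac b n / (risingFac c n * (Nat.factorial n : ℝ))

lemma risingFac_pos {q : ℝ} (hq : 0 < q) (n : ℕ) : 0 < risingFac q n :=
  Finset.prod_pos fun i _ => by positivity

lemma risingFac_succ (q : ℝ) (n : ℕ) : risingFac q (n+1) = risingFac q n * (q + n) :=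
  Finset.prod_range_succ _ _

lemma hcoef_pos {a b c : ℝ} (ha : 0 < a) (hb : 0 < b) (hc : 0 < c) (n : ℕ) :
    0 < hcoef a b c n := by
  have := risingFac_pos ha n; have := risingFac_pos hb n; have := risingFac_pos hc n
  have : (0:ℝ) < (Nat.factorial n : ℝ) := by exact_mod_cast Nat.factorial_pos n
  unfold hcoef; positivity

lemma hcoef_zero (a b c : ℝ) : hcoef a b c 0 = 1 := by
  simp [hcoef, risingFac]

lemma hcoef_succ {a b c : ℝ} (hc : 0 < c) (n : ℕ) :
    hcoef a b c (n+1) * ((c + n) * (n+1)) = hcoef a b c n * ((a + n) * (b + n)) := by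
  have h1 := risingFac_pos hc n
  have h2 : (0:ℝ) < (Nat.factorial n : ℝ) := by exact_mod_cast Nat.factorial_pos n
  have hcn : (0:ℝ) < c + n := by positivity
  unfold hcoef
  rw [risingFac_succ, risingFac_succ, risingFac_succ]
  push_cast [Nat.factorial_succ]
  field_simp

lemma hyp_summable {a b c : ℝ} (ha : 0 < a) (hb : 0 < b) (hc : 0 < c)
    {z : ℝ} (hz0 : 0 ≤ z) (hz1 : z < 1) :
    Summable (fun n => hcoef a b c n * z ^ n) := by
  apply summable_of_ratio_norm_eventually_le (r := (1+z)/2) (by linarith)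
  have hquad := quad_ev ((1+z)/2 - z) ((1+z)/2*(c+1) - z*(a+b)) ((1+z)/2*c - z*(a*b))
      (by linarith)
  filter_upwards [hquad] with n hn
  have hpos := hcoef_pos ha hb hc n
  have hpos1 := hcoef_pos ha hb hc (n+1)
  have hrec := hcoef_succ (a := a) (b := b) hc n
  have hzn : 0 ≤ z ^ n := pow_nonneg hz0 n
  rw [Real.norm_eq_abs, Real.norm_eq_abs, abs_of_nonneg (by positivity),
    abs_of_nonneg (by positivity)]
  have hcn : (0:ℝ) < (c + n) * (n+1) := by positivity
  rw [pow_succ]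
  rw [← mul_le_mul_iff_of_pos_right hcn]
  have heq : hcoef a b c (n+1) * (z^n * z) * ((c+n)*(n+1))
      = (hcoef a b c n * ((a+n)*(b+n))) * (z^n * z) := by
    rw [← hrec]; ring
  rw [heq]
  have key : z * ((a+n)*(b+n)) ≤ (1+z)/2 * ((c+n)*(n+1)) := by nlinarith
  calc hcoef a b c n * ((a+n)*(b+n)) * (z^n * z)
      = (hcoef a b c n * z^n) * (z * ((a+n)*(b+n))) := by ring
    _ ≤ (hcoef a b c n * z^n) * ((1+z)/2 * ((c+n)*(n+1))) := by
        apply mul_le_mul_of_nonneg_left key (by positivity)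
    _ = (1+z)/2 * (hcoef a b c n * z^n) * ((c+n)*(n+1)) := by ring

lemma hyp_eq_tsum (a b c z : ℝ) : hyp2F1 a b c z = ∑' n, hcoef a b c n * z ^ n := rfl

lemma hyp_strictMono {a b c : ℝ} (ha : 0 < a) (hb : 0 < b) (hc : 0 < c)
    {z w : ℝ} (hz0 : 0 ≤ z) (hzw : z < w) (hw1 : w < 1) :
    hyp2F1 a b c z < hyp2F1 a b c w := by
  rw [hyp_eq_tsum, hyp_eq_tsum]
  refine Summable.tsum_lt_tsum_of_nonneg (i := 1) (fun n => ?_) (fun n => ?_) ?_ ?_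
  · have := hcoef_pos ha hb hc n
    have := pow_nonneg hz0 n
    positivity
  · have := (hcoef_pos ha hb hc n).le
    exact mul_le_mul_of_nonneg_left (pow_le_pow_left₀ hz0 hzw.le n) this
  · have := hcoef_pos ha hb hc 1
    simpa using (mul_lt_mul_of_pos_left (by simpa using hzw) this)
  · exact hyp_summable ha hb hc (le_trans hz0 hzw.le) hw1

lemma hyp_one_le {a b c : ℝ} (ha : 0 < a) (hb : 0 < b) (hc : 0 < c)
    {z : ℝ} (hz0 : 0 ≤ z) (hz1 : z < 1) : 1 ≤ hyp2F1 a b c z := by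
  rw [hyp_eq_tsum]
  have h0 : hcoef a b c 0 * z ^ 0 = 1 := by simp [hcoef_zero]
  calc (1:ℝ) = hcoef a b c 0 * z ^ 0 := h0.symm
    _ ≤ ∑' n, hcoef a b c n * z ^ n := by
        apply Summable.le_tsum (hyp_summable ha hb hc hz0 hz1) 0
        intro i _
        have := hcoef_pos ha hb hc i
        have := pow_nonneg hz0 i
        positivity

lemma hyp_continuousOn {a b c : ℝ} (ha : 0 < a) (hb : 0 < b) (hc : 0 < c)
    {ρ : ℝ} (hρ0 : 0 ≤ ρ) (hρ1 : ρ < 1) :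
    ContinuousOn (hyp2F1 a b c) (Set.Icc 0 ρ) := by
  have h : ContinuousOn (fun z => ∑' n, hcoef a b c n * z ^ n) (Set.Icc 0 ρ) := by
    apply continuousOn_tsum (u := fun n => hcoef a b c n * ρ ^ n)
    · intro i; exact (continuous_const.mul (continuous_pow i)).continuousOn
    · exact hyp_summable ha hb hc hρ0 hρ1
    · intro n x hx
      have hco := (hcoef_pos ha hb hc n).le
      have hxn : 0 ≤ x ^ n := pow_nonneg hx.1 n
      rw [Real.norm_eq_abs, abs_of_nonneg (by positivity : (0:ℝ) ≤ hcoef a b c n * x ^ n)]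
      exact mul_le_mul_of_nonneg_left (pow_le_pow_left₀ hx.1 hx.2 n) hco
  exact h

lemma hcoef_not_summable {a b c : ℝ} (ha : 0 < a) (hb : 0 < b) (hc : 0 < c)
    (hd : c < a + b) : ¬ Summable (hcoef a b c) := by
  have hquad := quad_ev (a+b-c) (a*b+2*a+2*b-2*c-1) (2*(a*b)-c) (by linarith)
  rw [eventually_atTop] at hquad
  obtain ⟨N, hN⟩ := hquad
  intro hsum
  set sN : ℝ := hcoef a b c N * (N+1) with hsN
  have hsNpos : 0 < sN := by
    have := hcoef_pos ha hb hc N; positivity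
  have hmono : ∀ k : ℕ, sN ≤ hcoef a b c (N+k) * ((N+k : ℕ)+1) := by
    intro k
    induction k with
    | zero => simp [hsN]
    | succ m ih =>
      have hm : N ≤ N + m := Nat.le_add_right N m
      have step : hcoef a b c (N+m) * ((N+m : ℕ)+1) ≤
          hcoef a b c (N+m+1) * (((N+m : ℕ):ℝ)+1+1) := by
        have hrec := hcoef_succ (a := a) (b := b) hc (N+m)
        have hq := hN (N+m) hm
        set n : ℕ := N + m
        have hcm : (0:ℝ) < (c+n)*((n:ℝ)+1) := by positivity
        have h1 : hcoef a b c (n+1) = hcoef a b c n * ((a+n)*(b+n)) / ((c+n)*((n:ℝ)+1)) := by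
          rw [eq_div_iff hcm.ne']
          exact_mod_cast hrec
        rw [h1, div_mul_eq_mul_div, le_div_iff₀ hcm]
        have hco := hcoef_pos ha hb hc n
        nlinarith
      calc sN ≤ hcoef a b c (N+m) * ((N+m : ℕ)+1) := ih
        _ ≤ hcoef a b c (N+m+1) * (((N+m : ℕ):ℝ)+1+1) := step
        _ = hcoef a b c (N+(m+1)) * (((N+(m+1) : ℕ):ℝ)+1) := by
            rw [← Nat.add_assoc]; push_cast; ring
  have hsum2 : Summable (fun k : ℕ => sN / (((N+k : ℕ):ℝ)+1)) := by
    have hshift : Summable (fun k : ℕ => hcoef a b c (k + N)) :=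
      (summable_nat_add_iff N).mpr hsum
    apply Summable.of_nonneg_of_le (fun k => by positivity) (fun k => ?_) hshift
    have h := hmono k
    have hpos : (0:ℝ) < ((N+k : ℕ):ℝ)+1 := by positivity
    rw [div_le_iff₀ hpos, Nat.add_comm k N]
    linarith
  have hharm : Summable (fun k : ℕ => 1 / (((N+k : ℕ):ℝ)+1)) := by
    have := hsum2.mul_left (1/sN)
    apply this.congr
    intro k
    field_simp
  have : Summable (fun k : ℕ => 1 / ((k:ℝ)+1)) := by
    rw [← summable_nat_add_iff N]
    apply hharm.congr
    intro k
    norm_num [Nat.add_comm]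
  have h1 := Real.not_summable_one_div_natCast
  apply h1
  rw [← summable_nat_add_iff 1]
  apply this.congr
  intro k
  push_cast
  norm_num

lemma hyp_unbounded {a b c : ℝ} (ha : 0 < a) (hb : 0 < b) (hc : 0 < c)
    (hd : c < a + b) (M : ℝ) :
    ∃ w : ℝ, w ∈ Set.Ioo (1/2 : ℝ) 1 ∧ M < hyp2F1 a b c w := by
  have hns := hcoef_not_summable ha hb hc hd
  have hnonneg : ∀ n, 0 ≤ hcoef a b c n := fun n => (hcoef_pos ha hb hc n).le
  have htend := (not_summable_iff_tendsto_nat_atTop_of_nonneg hnonneg).mp hns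
  obtain ⟨N, hNge⟩ := (htend.eventually_ge_atTop (M+1)).exists
  have hcont : Tendsto (fun w : ℝ => ∑ i ∈ range N, hcoef a b c i * w ^ i)
      (nhdsWithin 1 (Set.Ioo (1/2 : ℝ) 1)) (nhds (∑ i ∈ range N, hcoef a b c i)) := by
    have : ContinuousAt (fun w : ℝ => ∑ i ∈ range N, hcoef a b c i * w ^ i) 1 := by
      apply Continuous.continuousAt; continuity
    have h := this.continuousWithinAt (s := Set.Ioo (1/2 : ℝ) 1)
    simpa using h.tendsto
  have hev : ∀ᶠ w in nhdsWithin 1 (Set.Ioo (1/2 : ℝ) 1),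
      M < ∑ i ∈ range N, hcoef a b c i * w ^ i :=
    hcont.eventually (eventually_gt_nhds (by linarith))
  have hmem : ∀ᶠ w in nhdsWithin 1 (Set.Ioo (1/2 : ℝ) 1), w ∈ Set.Ioo (1/2 : ℝ) 1 :=
    eventually_mem_nhdsWithin
  have hne : (nhdsWithin (1:ℝ) (Set.Ioo (1/2 : ℝ) 1)).NeBot := by
    apply mem_closure_iff_nhdsWithin_neBot.mp
    rw [closure_Ioo (by norm_num : (1/2 : ℝ) ≠ 1)]
    exact ⟨by norm_num, le_refl 1⟩
  obtain ⟨w, hw1, hw2⟩ := (hev.and hmem).exists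
  refine ⟨w, hw2, lt_of_lt_of_le hw1 ?_⟩
  rw [hyp_eq_tsum]
  apply Summable.sum_le_tsum (range N) (fun i _ => ?_) (hyp_summable ha hb hc (by linarith [hw2.1]) hw2.2)
  have := hcoef_pos ha hb hc i
  have : (0:ℝ) ≤ w ^ i := pow_nonneg (by linarith [hw2.1]) i
  positivity


/-- for `κ ∈ (0,8)` with `cos(4π/κ) > 0`, there is a unique
`z ∈ (0,1)` with `₂F₁(4/κ, 12/κ−1, 8/κ; z) = 2cos(4π/κ)·₂F₁(4/κ, 12/κ−1, 8/κ; 1−z)`. -/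
theorem statement15 (κ : ℝ) (hκ : κ ∈ Set.Ioo (0:ℝ) 8)
    (hcos : 0 < Real.cos (4 * Real.pi / κ)) :
    ∃! z : ℝ, z ∈ Set.Ioo (0:ℝ) 1 ∧
      hyp2F1 (4/κ) (12/κ - 1) (8/κ) z
        = 2 * Real.cos (4 * Real.pi / κ) * hyp2F1 (4/κ) (12/κ - 1) (8/κ) (1 - z) := by
  obtain ⟨hκ0, hκ8⟩ := hκ
  set a : ℝ := 4/κ with haa
  set b : ℝ := 12/κ - 1 with hbb
  set c : ℝ := 8/κ with hcc
  have ha : 0 < a := by positivity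
  have hb : 0 < b := by
    rw [hbb, sub_pos, lt_div_iff₀ hκ0]; linarith
  have hc : 0 < c := by positivity
  have hd : c < a + b := by
    rw [haa, hbb, hcc]
    have : (1:ℝ) < 8/κ := (one_lt_div hκ0).mpr hκ8
    have h48 : 4/κ + (12/κ - 1) - 8/κ = 8/κ - 1 := by ring
    linarith
  set c₀ : ℝ := 2 * Real.cos (4 * Real.pi / κ) with hc₀
  have hc₀pos : 0 < c₀ := by positivity
  set F : ℝ → ℝ := hyp2F1 a b c with hF
  have hF12pos : (0:ℝ) < F (1/2) :=
    lt_of_lt_of_le one_pos (hyp_one_le ha hb hc (by norm_num) (by norm_num))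
  -- point with g < 0
  obtain ⟨w₁, hw₁mem, hw₁⟩ := hyp_unbounded ha hb hc hd (F (1/2) / c₀)
  set z₁ : ℝ := 1 - w₁ with hz₁
  have hz₁mem : z₁ ∈ Set.Ioo (0:ℝ) (1/2) := by
    constructor <;> simp only [hz₁] <;> [linarith [hw₁mem.2]; linarith [hw₁mem.1]]
  have hg₁ : F z₁ < c₀ * F (1 - z₁) := by
    have h1 : F z₁ < F (1/2) :=
      hyp_strictMono ha hb hc hz₁mem.1.le hz₁mem.2 (by norm_num)
    have h2 : F (1/2) / c₀ < F (1 - z₁) := by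
      simpa [hz₁] using hw₁
    rw [div_lt_iff₀ hc₀pos] at h2
    nlinarith
  -- point with g > 0
  obtain ⟨z₂, hz₂mem, hz₂⟩ := hyp_unbounded ha hb hc hd (c₀ * F (1/2))
  have hg₂ : c₀ * F (1 - z₂) < F z₂ := by
    have h1 : F (1 - z₂) < F (1/2) := by
      apply hyp_strictMono ha hb hc (by linarith [hz₂mem.2]) (by linarith [hz₂mem.1])
        (by norm_num)
    nlinarith
  have hz₁z₂ : z₁ < z₂ := by
    have := hz₁mem.2; have := hz₂mem.1; linarith
  -- continuity of g on [z₁, z₂]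
  set ρ : ℝ := max z₂ (1 - z₁) with hρ
  have hρ1 : ρ < 1 := by
    apply max_lt hz₂mem.2; linarith [hz₁mem.1]
  have hρ0 : 0 ≤ ρ := le_trans (by linarith [hz₂mem.1]) (le_max_left _ _)
  have hFc := hyp_continuousOn ha hb hc hρ0 hρ1
  set g : ℝ → ℝ := fun z => F z - c₀ * F (1 - z) with hg
  have hsub1 : Set.Icc z₁ z₂ ⊆ Set.Icc (0:ℝ) ρ := by
    intro x hx
    exact ⟨by linarith [hx.1, hz₁mem.1], le_trans hx.2 (le_max_left _ _)⟩
  have hsub2 : (fun z : ℝ => 1 - z) '' Set.Icc z₁ z₂ ⊆ Set.Icc (0:ℝ) ρ := by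
    intro x hx
    obtain ⟨y, hy, rfl⟩ := hx
    have hy1 := hy.1
    have hy2 := hy.2
    refine ⟨?_, ?_⟩
    · show (0:ℝ) ≤ 1 - y
      linarith [hz₂mem.2]
    · show 1 - y ≤ ρ
      exact le_trans (by linarith) (le_max_right _ _)
  have hgc : ContinuousOn g (Set.Icc z₁ z₂) := by
    apply ContinuousOn.sub
    · exact hFc.mono hsub1
    · apply ContinuousOn.mul continuousOn_const
      apply ContinuousOn.comp hFc (Continuous.continuousOn (by continuity))
      intro x hx
      exact hsub2 ⟨x, hx, rfl⟩
  have hivt := intermediate_value_Ioo hz₁z₂.le hgc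
  have h0mem : (0:ℝ) ∈ Set.Ioo (g z₁) (g z₂) := ⟨by simp [hg]; linarith, by simp [hg]; linarith⟩
  obtain ⟨z, hzmem, hgz⟩ := hivt h0mem
  have hzIoo : z ∈ Set.Ioo (0:ℝ) 1 :=
    ⟨lt_of_le_of_lt hz₁mem.1.le (by exact_mod_cast hzmem.1),
     lt_of_lt_of_le hzmem.2 hz₂mem.2.le⟩
  refine ⟨z, ⟨hzIoo, ?_⟩, ?_⟩
  · have : F z - c₀ * F (1 - z) = 0 := hgz
    rw [hF] at this
    linarith [this]
  · rintro y ⟨hyIoo, hyeq⟩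
    by_contra hne
    have heq : F z = c₀ * F (1 - z) := by linarith [show F z - c₀ * F (1-z) = 0 from hgz]
    rcases lt_or_gt_of_ne hne with h | h
    · -- y < z
      have h1 : F y < F z := hyp_strictMono ha hb hc hyIoo.1.le h hzIoo.2
      have h2 : F (1 - z) < F (1 - y) :=
        hyp_strictMono ha hb hc (by linarith [hzIoo.2]) (by linarith) (by linarith [hyIoo.1])
      have hy' : F y = c₀ * F (1 - y) := hyeq
      have := mul_lt_mul_of_pos_left h2 hc₀pos
      linarith
    · have h1 : F z < F y := hyp_strictMono ha hb hc hzIoo.1.le h hyIoo.2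
      have h2 : F (1 - y) < F (1 - z) :=
        hyp_strictMono ha hb hc (by linarith [hyIoo.2]) (by linarith) (by linarith [hzIoo.1])
      have hy' : F y = c₀ * F (1 - y) := hyeq
      have := mul_lt_mul_of_pos_left h2 hc₀pos
      linarith
end

section
/- Define ζ : (0, 8/3] → [0,1) by ζ(κ) = z(κ) whenever cos(4π/κ) > 0, where z(κ) ∈ (0,1) is the unique solution of ₂F₁(4/κ, 12/κ−1, 8/κ; z) = 2cos(4π/κ) · ₂F₁(4/κ, 12/κ−1, 8/κ; 1−z), and ζ(κ) = 0 whenever cos(4π/κ) ≤ 0. Then limsup_{κ→0⁺} ζ(κ) = 1/2 and liminf_{κ→0⁺} ζ(κ) = 0. -/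
namespace S17

lemma risingFac_pos {q : ℝ} (hq : 0 < q) (n : ℕ) : 0 < risingFac q n := by
  unfold risingFac
  exact Finset.prod_pos fun i _ => by positivity

lemma risingFac_succ (q : ℝ) (n : ℕ) : risingFac q (n+1) = risingFac q n * (q + n) :=
  Finset.prod_range_succ _ _

/-- coefficient of the hypergeometric series with `b = 3a-1`, `c = 2a`. -/
noncomputable def coF (a : ℝ) (n : ℕ) : ℝ :=
  risingFac a n * risingFac (3*a-1) n / (risingFac (2*a) n * (Nat.factorial n : ℝ))

lemma coF_pos {a : ℝ} (ha : 1 ≤ a) (n : ℕ) : 0 < coF a n := by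
  have h1 : (0:ℝ) < a := by linarith
  have h2 : (0:ℝ) < 3*a-1 := by linarith
  have h3 : (0:ℝ) < 2*a := by linarith
  have h4 : (0:ℝ) < (Nat.factorial n : ℝ) := by positivity
  exact div_pos (mul_pos (risingFac_pos h1 n) (risingFac_pos h2 n))
    (mul_pos (risingFac_pos h3 n) h4)

lemma coF_zero (a : ℝ) : coF a 0 = 1 := by
  simp [coF, risingFac]

lemma coF_rec {a : ℝ} (ha : 1 ≤ a) (n : ℕ) :
    coF a (n+1) * ((2*a + n) * (n+1)) = coF a n * ((a + n) * (3*a - 1 + n)) := by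
  have h3 : (0:ℝ) < 2*a := by linarith
  have hr : risingFac (2*a) n ≠ 0 := ne_of_gt (risingFac_pos h3 n)
  have hf : (Nat.factorial n : ℝ) ≠ 0 := by positivity
  have hc : (2*a + n) ≠ 0 := by positivity
  have hn1 : ((n:ℝ)+1) ≠ 0 := by positivity
  unfold coF
  rw [risingFac_succ, risingFac_succ, risingFac_succ, Nat.factorial_succ]
  push_cast
  field_simp

/-- term of the series -/
noncomputable def tF (a z : ℝ) (n : ℕ) : ℝ := coF a n * z ^ n

lemma tF_nonneg {a z : ℝ} (ha : 1 ≤ a) (hz : 0 ≤ z) (n : ℕ) : 0 ≤ tF a z n :=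
  mul_nonneg (coF_pos ha n).le (pow_nonneg hz n)

lemma tF_rec {a z : ℝ} (ha : 1 ≤ a) (n : ℕ) :
    tF a z (n+1) * ((2*a + n) * (n+1)) = tF a z n * ((a + n) * (3*a - 1 + n) * z) := by
  unfold tF
  rw [pow_succ]
  calc coF a (n+1) * (z^n*z) * ((2*a + n) * (n+1))
      = (coF a (n+1) * ((2*a + n) * (n+1))) * (z^n*z) := by ring
    _ = (coF a n * ((a + n) * (3*a - 1 + n))) * (z^n*z) := by rw [coF_rec ha n]
    _ = coF a n * z^n * ((a + n) * (3*a - 1 + n) * z) := by ring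

lemma summable_tF {a z : ℝ} (ha : 1 ≤ a) (hz0 : 0 ≤ z) (hz1 : z < 1) :
    Summable (tF a z) := by
  set r : ℝ := (1+z)/2 with hr
  have hrz : z < r := by rw [hr]; linarith
  have hr1 : r < 1 := by rw [hr]; linarith
  have hr0 : 0 < r := by rw [hr]; linarith
  apply summable_of_ratio_norm_eventually_le hr1
  have hN : ∃ N : ℕ, (3*a - 1)*z ≤ N * (r - z) := by
    obtain ⟨N, hN⟩ := exists_nat_ge ((3*a-1)*z / (r-z))
    exact ⟨N, by rw [div_le_iff₀ (by linarith)] at hN; linarith⟩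
  obtain ⟨N, hN⟩ := hN
  filter_upwards [Filter.eventually_ge_atTop N] with n hn
  have hzn : 0 ≤ tF a z n := tF_nonneg ha hz0 n
  have hzn1 : 0 ≤ tF a z (n+1) := tF_nonneg ha hz0 (n+1)
  rw [Real.norm_of_nonneg hzn1, Real.norm_of_nonneg hzn]
  have hpos : (0:ℝ) < (2*a + n) * (n+1) := by positivity
  rw [← mul_le_mul_iff_left₀ hpos, tF_rec ha n]
  have key : (a + n) * (3*a - 1 + n) * z ≤ r * ((2*a + n) * (n+1)) := by
    have h1 : (a + n) ≤ 2*a + n := by linarith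
    have h2 : (3*a - 1 + n) * z ≤ r * (n+1) := by
      have : (3*a-1)*z ≤ n * (r - z) := le_trans hN (by
        have : (N:ℝ) ≤ n := by exact_mod_cast hn
        nlinarith)
      nlinarith
    calc (a + n) * (3*a - 1 + n) * z = (a+n) * ((3*a-1+n)*z) := by ring
      _ ≤ (2*a+n) * (r * (n+1)) := by
          apply mul_le_mul h1 h2 (by nlinarith) (by positivity)
      _ = r * ((2*a+n)*(n+1)) := by ring
  calc tF a z n * ((a + n) * (3*a - 1 + n) * z)
      ≤ tF a z n * (r * ((2*a + n) * (n+1))) := by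
        apply mul_le_mul_of_nonneg_left key hzn
    _ = r * tF a z n * ((2*a + n) * (n+1)) := by ring

/-- the sum -/
noncomputable def FS (a z : ℝ) : ℝ := ∑' n, tF a z n

lemma hyp2F1_eq_FS {κ : ℝ} (hκ : 0 < κ) (z : ℝ) :
    hyp2F1 (4/κ) (12/κ - 1) (8/κ) z = FS (4/κ) z := by
  have h1 : 12/κ - 1 = 3*(4/κ) - 1 := by ring
  have h2 : 8/κ = 2*(4/κ) := by ring
  rw [hyp2F1, h1, h2]
  rfl

lemma one_le_FS {a z : ℝ} (ha : 1 ≤ a) (hz0 : 0 ≤ z) (hz1 : z < 1) : 1 ≤ FS a z := by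
  have h := Summable.le_tsum (summable_tF ha hz0 hz1) 0 (fun j _ => tF_nonneg ha hz0 j)
  simpa [FS, tF, coF_zero] using h

lemma FS_mono {a z₁ z₂ : ℝ} (ha : 1 ≤ a) (hz0 : 0 ≤ z₁) (h12 : z₁ ≤ z₂) (hz1 : z₂ < 1) :
    FS a z₁ ≤ FS a z₂ := by
  apply Summable.tsum_le_tsum _ (summable_tF ha hz0 (lt_of_le_of_lt h12 hz1))
    (summable_tF ha (le_trans hz0 h12) hz1)
  intro n
  exact mul_le_mul_of_nonneg_left (pow_le_pow_left₀ hz0 h12 n) (coF_pos ha n).le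


lemma main_comp {ε : ℝ} (hε : 0 < ε) (hε2 : ε < 1/2) :
    ∃ A : ℝ, 1 ≤ A ∧ ∀ a : ℝ, A ≤ a → 3 * FS a (1/2 - ε) < FS a (1/2 + ε) := by
  set y : ℝ := 1/2 - ε with hy
  set x : ℝ := 1/2 + ε with hx
  have hy0 : 0 < y := by rw [hy]; linarith
  have hy1 : y < 1 := by rw [hy]; linarith
  have hx0 : 0 < x := by rw [hx]; linarith
  have hx1 : x < 1 := by rw [hx]; linarith
  have hyx : y < x := by rw [hx, hy]; linarith
  have hxy : 1 < x/y := (one_lt_div hy0).2 hyx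
  obtain ⟨N0, hN0⟩ := pow_unbounded_of_one_lt (6:ℝ) hxy
  set N : ℕ := max N0 1 with hNdef
  have hN1 : 1 ≤ N := le_max_right _ _
  have hpow : 6 < (x/y)^N :=
    lt_of_lt_of_le hN0 (pow_le_pow_right₀ hxy.le (le_max_left _ _))
  refine ⟨max (N:ℝ) (6*(N:ℝ)^2/y), le_trans (by exact_mod_cast hN1) (le_max_left _ _), ?_⟩
  intro a ha
  have haN : (N:ℝ) ≤ a := le_trans (le_max_left _ _) ha
  have ha1 : 1 ≤ a := le_trans (by exact_mod_cast hN1) haN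
  have hay : 6*(N:ℝ)^2 ≤ a * y := by
    have h := le_trans (le_max_right _ _) ha
    rwa [div_le_iff₀ hy0] at h
  -- step (i)
  have stepi : ∀ n : ℕ, n < N → 4*(N:ℝ) * tF a y n ≤ tF a y (n+1) := by
    intro n hn
    have hnN : (n:ℝ) + 1 ≤ N := by exact_mod_cast hn
    have hna : (n:ℝ) ≤ a := by
      have : (n:ℝ) ≤ N := by linarith
      linarith
    have hpos : (0:ℝ) < (2*a + n) * (n+1) := by positivity
    rw [← mul_le_mul_iff_left₀ hpos, tF_rec ha1 n]
    have hscal : 4*(N:ℝ) * ((2*a + n) * (n+1)) ≤ (a + n) * (3*a - 1 + n) * y := by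
      have h1 : (2*a + n) * ((n:ℝ)+1) ≤ 3*a*N := by
        calc (2*a + n) * ((n:ℝ)+1) ≤ (3*a) * ((n:ℝ)+1) :=
              mul_le_mul_of_nonneg_right (by linarith) (by positivity)
          _ ≤ 3*a*N := mul_le_mul_of_nonneg_left hnN (by linarith)
      have h2 : a*(2*a) ≤ (a+n)*(3*a-1+n) := by nlinarith [(Nat.cast_nonneg n : (0:ℝ) ≤ n)]
      calc 4*(N:ℝ) * ((2*a + n) * (n+1)) ≤ 4*(N:ℝ) * (3*a*N) := by
            apply mul_le_mul_of_nonneg_left h1 (by positivity)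
        _ = 2*a*(6*(N:ℝ)^2) := by ring
        _ ≤ 2*a*(a*y) := by apply mul_le_mul_of_nonneg_left hay (by linarith)
        _ = (a*(2*a))*y := by ring
        _ ≤ ((a+n)*(3*a-1+n))*y := mul_le_mul_of_nonneg_right h2 hy0.le
    calc 4*(N:ℝ) * tF a y n * ((2*a + n) * (n+1))
        = tF a y n * (4*(N:ℝ) * ((2*a + n) * (n+1))) := by ring
      _ ≤ tF a y n * ((a + n) * (3*a - 1 + n) * y) :=
          mul_le_mul_of_nonneg_left hscal (tF_nonneg ha1 hy0.le n)
  -- monotone chain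
  have claim1 : ∀ m : ℕ, m < N → tF a y m ≤ tF a y (m+1) := by
    intro m hm
    refine le_trans ?_ (stepi m hm)
    apply le_mul_of_one_le_left (tF_nonneg ha1 hy0.le m)
    have : (1:ℝ) ≤ N := by exact_mod_cast hN1
    linarith
  have claim2 : ∀ k n : ℕ, n + k ≤ N → tF a y n ≤ tF a y (n+k) := by
    intro k
    induction k with
    | zero => intro n _; simp
    | succ k ih =>
      intro n h
      calc tF a y n ≤ tF a y (n+k) := ih n (by omega)
        _ ≤ tF a y (n+k+1) := claim1 (n+k) (by omega)
  have stepii : ∀ n : ℕ, n < N → 4*(N:ℝ) * tF a y n ≤ tF a y N := by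
    intro n hn
    refine le_trans (stepi n hn) ?_
    have h := claim2 (N - (n+1)) (n+1) (by omega)
    rwa [show n+1+(N-(n+1)) = N by omega] at h
  -- summabilities
  have hsy := summable_tF ha1 hy0.le hy1
  have hsx := summable_tF ha1 hx0.le hx1
  have hsy' : Summable (fun n => tF a y (n+N)) := (summable_nat_add_iff N).2 hsy
  have hsx' : Summable (fun n => tF a x (n+N)) := (summable_nat_add_iff N).2 hsx
  have htFN_le : tF a y N ≤ FS a y := Summable.le_tsum hsy N (fun j _ => tF_nonneg ha1 hy0.le j)
  have h4N : (0:ℝ) < 4*(N:ℝ) := by positivity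
  -- step (iii)
  have hS : ∑ n ∈ Finset.range N, tF a y n ≤ FS a y / 4 := by
    have hb : ∀ n ∈ Finset.range N, tF a y n ≤ tF a y N / (4*(N:ℝ)) := by
      intro n hn
      rw [le_div_iff₀ h4N]
      have := stepii n (Finset.mem_range.1 hn)
      linarith
    calc ∑ n ∈ Finset.range N, tF a y n ≤ ∑ _n ∈ Finset.range N, tF a y N / (4*(N:ℝ)) :=
          Finset.sum_le_sum hb
      _ = (N:ℝ) * (tF a y N / (4*(N:ℝ))) := by rw [Finset.sum_const, Finset.card_range]; ring
      _ = tF a y N / 4 := by field_simp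
      _ ≤ FS a y / 4 := by linarith
  -- step (iv)
  have hsplit_y := Summable.sum_add_tsum_nat_add N hsy
  set T : ℝ := ∑' n, tF a y (n+N) with hT
  have hTge : 3/4 * FS a y ≤ T := by
    have hys : ∑ i ∈ Finset.range N, tF a y i + T = FS a y := hsplit_y
    linarith
  -- step (v)
  have hterm : ∀ n : ℕ, (x/y)^N * tF a y (n+N) ≤ tF a x (n+N) := by
    intro n
    unfold tF
    have hxyN : (x/y)^N * y^(n+N) = x^N * y^n := by
      rw [div_pow, pow_add]
      field_simp
    calc (x/y)^N * (coF a (n+N) * y^(n+N)) = coF a (n+N) * (x^N * y^n) := by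
          rw [← hxyN]; ring
      _ ≤ coF a (n+N) * (x^N * x^n) := by
          apply mul_le_mul_of_nonneg_left _ (coF_pos ha1 (n+N)).le
          apply mul_le_mul_of_nonneg_left (pow_le_pow_left₀ hy0.le hyx.le n) (by positivity)
      _ = coF a (n+N) * x^(n+N) := by rw [pow_add]; ring
  have hTx : (x/y)^N * T ≤ ∑' n, tF a x (n+N) := by
    rw [hT, ← tsum_mul_left]
    exact Summable.tsum_le_tsum hterm (hsy'.mul_left _) hsx'
  -- step (vi)
  have hsplit_x := Summable.sum_add_tsum_nat_add N hsx
  have hSx : 0 ≤ ∑ n ∈ Finset.range N, tF a x n :=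
    Finset.sum_nonneg (fun n _ => tF_nonneg ha1 hx0.le n)
  have hFx : (x/y)^N * T ≤ FS a x := by
    have hxs : ∑ i ∈ Finset.range N, tF a x i + (∑' n, tF a x (n+N)) = FS a x := hsplit_x
    linarith
  have hFy1 : 1 ≤ FS a y := one_le_FS ha1 hy0.le hy1
  have hT0 : 0 < T := by linarith
  have : 6 * T ≤ (x/y)^N * T := mul_le_mul_of_nonneg_right hpow.le hT0.le
  nlinarith

end S17

/-- let `ζ : (0,8/3] → [0,1)` be given by `ζ(κ) = z(κ)` (the unique
solution of `₂F₁(4/κ,12/κ−1,8/κ;z) = 2cos(4π/κ)·₂F₁(4/κ,12/κ−1,8/κ;1−z)` in `(0,1)`)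
when `cos(4π/κ) > 0`, and `ζ(κ) = 0` when `cos(4π/κ) ≤ 0`. Then
`limsup_{κ→0⁺} ζ(κ) = 1/2` and `liminf_{κ→0⁺} ζ(κ) = 0`. -/
theorem statement17 (ζ : ℝ → ℝ)
    (hζpos : ∀ κ ∈ Set.Ioc (0:ℝ) (8/3), 0 < Real.cos (4 * Real.pi / κ) →
      ζ κ ∈ Set.Ioo (0:ℝ) 1 ∧
        hyp2F1 (4/κ) (12/κ - 1) (8/κ) (ζ κ)
          = 2 * Real.cos (4 * Real.pi / κ) * hyp2F1 (4/κ) (12/κ - 1) (8/κ) (1 - ζ κ))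
    (hζnonpos : ∀ κ ∈ Set.Ioc (0:ℝ) (8/3), Real.cos (4 * Real.pi / κ) ≤ 0 → ζ κ = 0) :
    Filter.limsup ζ (nhdsWithin 0 (Set.Ioi 0)) = 1/2 ∧
    Filter.liminf ζ (nhdsWithin 0 (Set.Ioi 0)) = 0 := by
  classical
  set l : Filter ℝ := nhdsWithin 0 (Set.Ioi 0) with hl
  have hIoo : Set.Ioo (0:ℝ) (8/3) ∈ l := Ioo_mem_nhdsGT (by norm_num)
  have hub : ∀ᶠ κ in l, ζ κ ≤ 1 := by
    filter_upwards [hIoo] with κ hκ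
    have hmem : κ ∈ Set.Ioc (0:ℝ) (8/3) := ⟨hκ.1, hκ.2.le⟩
    rcases le_or_gt (Real.cos (4 * Real.pi / κ)) 0 with hc | hc
    · rw [hζnonpos κ hmem hc]; norm_num
    · exact (hζpos κ hmem hc).1.2.le
  have hlb : ∀ᶠ κ in l, 0 ≤ ζ κ := by
    filter_upwards [hIoo] with κ hκ
    have hmem : κ ∈ Set.Ioc (0:ℝ) (8/3) := ⟨hκ.1, hκ.2.le⟩
    rcases le_or_gt (Real.cos (4 * Real.pi / κ)) 0 with hc | hc
    · rw [hζnonpos κ hmem hc]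
    · exact (hζpos κ hmem hc).1.1.le
  have hbdd_le : Filter.IsBoundedUnder (· ≤ ·) l ζ := Filter.isBoundedUnder_of_eventually_le hub
  have hbdd_ge : Filter.IsBoundedUnder (· ≥ ·) l ζ := Filter.isBoundedUnder_of_eventually_ge hlb
  have hcob_le : Filter.IsCoboundedUnder (· ≤ ·) l ζ := hbdd_ge.isCoboundedUnder_le
  have hcob_ge : Filter.IsCoboundedUnder (· ≥ ·) l ζ := hbdd_le.isCoboundedUnder_ge
  constructor
  · -- limsup = 1/2
    apply le_antisymm
    · -- limsup ≤ 1/2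
      apply le_of_forall_pos_le_add
      intro ε hε
      set ε' : ℝ := min ε (1/4) with hε'def
      have hε'1 : 0 < ε' := lt_min hε (by norm_num)
      have hε'2 : ε' < 1/2 := lt_of_le_of_lt (min_le_right _ _) (by norm_num)
      have hε'3 : ε' ≤ ε := min_le_left _ _
      obtain ⟨A, hA1, hA⟩ := S17.main_comp hε'1 hε'2
      have hA0 : 0 < A := by linarith
      set δ : ℝ := min (8/3) (4/A) with hδdef
      have hδ0 : 0 < δ := lt_min (by norm_num) (by positivity)
      apply Filter.limsup_le_of_le hcob_le
      filter_upwards [Ioo_mem_nhdsGT_of_mem (Set.mem_Ico.2 ⟨le_refl (0:ℝ), hδ0⟩)] with κ hκ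
      obtain ⟨κ0, κδ⟩ := hκ
      have hmem : κ ∈ Set.Ioc (0:ℝ) (8/3) :=
        ⟨κ0, le_of_lt (lt_of_lt_of_le κδ (min_le_left _ _))⟩
      rcases le_or_gt (Real.cos (4 * Real.pi / κ)) 0 with hc | hc
      · rw [hζnonpos κ hmem hc]; linarith
      · obtain ⟨hzmem, heq⟩ := hζpos κ hmem hc
        rw [S17.hyp2F1_eq_FS κ0, S17.hyp2F1_eq_FS κ0] at heq
        by_contra hcon
        push_neg at hcon
        have h' : 1/2 + ε' < ζ κ := by
          have : 1/2 + ε ≤ ζ κ := by linarith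
          linarith
        have haA : A ≤ 4/κ := by
          have hκ4A : κ < 4/A := lt_of_lt_of_le κδ (min_le_right _ _)
          rw [le_div_iff₀ κ0]
          rw [lt_div_iff₀ hA0] at hκ4A
          linarith
        have ha1 : (1:ℝ) ≤ 4/κ := le_trans hA1 haA
        have hcomp := hA (4/κ) haA
        have h1 : S17.FS (4/κ) (1/2+ε') ≤ S17.FS (4/κ) (ζ κ) :=
          S17.FS_mono ha1 (by linarith) h'.le hzmem.2
        have h2 : S17.FS (4/κ) (1 - ζ κ) ≤ S17.FS (4/κ) (1/2-ε') :=
          S17.FS_mono ha1 (by linarith [hzmem.2]) (by linarith) (by linarith)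
        have h3 : 1 ≤ S17.FS (4/κ) (1 - ζ κ) :=
          S17.one_le_FS ha1 (by linarith [hzmem.2]) (by linarith [hzmem.1])
        have hcos1 : Real.cos (4 * Real.pi / κ) ≤ 1 := Real.cos_le_one _
        have h4 : 2 * Real.cos (4 * Real.pi / κ) * S17.FS (4/κ) (1 - ζ κ)
            ≤ 2 * S17.FS (4/κ) (1 - ζ κ) := by nlinarith
        linarith
    · -- 1/2 ≤ limsup
      have key : ∀ ε : ℝ, 0 < ε → 1/2 - ε ≤ Filter.limsup ζ l := by
        intro ε hε
        set ε' : ℝ := min ε (1/4) with hε'def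
        have hε'1 : 0 < ε' := lt_min hε (by norm_num)
        have hε'2 : ε' < 1/2 := lt_of_le_of_lt (min_le_right _ _) (by norm_num)
        have hε'3 : ε' ≤ ε := min_le_left _ _
        obtain ⟨A, hA1, hA⟩ := S17.main_comp hε'1 hε'2
        have hfreq : ∃ᶠ κ in l, 1/2 - ε ≤ ζ κ := by
          rw [Filter.frequently_iff]
          intro U hU
          rw [hl, mem_nhdsGT_iff_exists_Ioc_subset] at hU
          obtain ⟨u, hu, hsub⟩ := hU
          have hu0 : (0:ℝ) < u := hu
          obtain ⟨m, hm⟩ := exists_nat_gt (max (2/u) A)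
          have hmA : A < m := lt_of_le_of_lt (le_max_right _ _) hm
          have hm1 : (1:ℝ) ≤ m := by linarith
          have hm0 : (0:ℝ) < m := by linarith
          set κ : ℝ := 2/m with hκdef
          have κ0 : 0 < κ := by positivity
          have hκu : κ ≤ u := by
            have h2u : 2/u < m := lt_of_le_of_lt (le_max_left _ _) hm
            rw [hκdef, div_le_iff₀ hm0]
            rw [div_lt_iff₀ hu0] at h2u
            nlinarith
          have hmem : κ ∈ Set.Ioc (0:ℝ) (8/3) := by
            constructor
            · exact κ0
            · rw [hκdef, div_le_iff₀ hm0]; nlinarith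
          have hcosval : Real.cos (4 * Real.pi / κ) = 1 := by
            have harg : 4 * Real.pi / κ = m * (2 * Real.pi) := by
              rw [hκdef]; field_simp; ring
            rw [harg, Real.cos_nat_mul_two_pi]
          have hc : 0 < Real.cos (4 * Real.pi / κ) := by rw [hcosval]; norm_num
          obtain ⟨hzmem, heq⟩ := hζpos κ hmem hc
          rw [S17.hyp2F1_eq_FS κ0, S17.hyp2F1_eq_FS κ0, hcosval] at heq
          have haA : A ≤ 4/κ := by
            rw [hκdef]
            rw [div_div_eq_mul_div]
            rw [le_div_iff₀ (by norm_num : (0:ℝ) < 2)]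
            nlinarith
          have ha1 : (1:ℝ) ≤ 4/κ := le_trans hA1 haA
          have hcomp := hA (4/κ) haA
          refine ⟨κ, hsub ⟨κ0, hκu⟩, ?_⟩
          by_contra hcon
          push_neg at hcon
          have h' : ζ κ < 1/2 - ε' := by
            rcases lt_or_ge (ζ κ) (1/2 - ε') with h | h
            · exact h
            · exfalso; exact absurd (by linarith : 1/2 - ε ≤ ζ κ) (not_le.2 hcon)
          have h1 : S17.FS (4/κ) (ζ κ) ≤ S17.FS (4/κ) (1/2-ε') :=
            S17.FS_mono ha1 hzmem.1.le h'.le (by linarith)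
          have h2 : S17.FS (4/κ) (1/2+ε') ≤ S17.FS (4/κ) (1 - ζ κ) :=
            S17.FS_mono ha1 (by linarith) (by linarith) (by linarith [hzmem.1])
          have h3 : 1 ≤ S17.FS (4/κ) (ζ κ) :=
            S17.one_le_FS ha1 hzmem.1.le hzmem.2
          linarith
        exact Filter.le_limsup_of_frequently_le hfreq hbdd_le
      apply le_of_forall_pos_le_add
      intro ε hε
      have := key ε hε
      linarith
  · -- liminf = 0
    apply le_antisymm
    · -- liminf ≤ 0
      apply Filter.liminf_le_of_frequently_le _ hbdd_ge
      rw [Filter.frequently_iff]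
      intro U hU
      rw [hl, mem_nhdsGT_iff_exists_Ioc_subset] at hU
      obtain ⟨u, hu, hsub⟩ := hU
      have hu0 : (0:ℝ) < u := hu
      obtain ⟨m, hm⟩ := exists_nat_gt (max (4/u) 1)
      have hm1 : (1:ℝ) ≤ m := le_of_lt (lt_of_le_of_lt (le_max_right _ _) hm)
      have hm0 : (0:ℝ) < m := by linarith
      have hden : (0:ℝ) < 2*(m:ℝ)+1 := by linarith
      set κ : ℝ := 4/(2*(m:ℝ)+1) with hκdef
      have κ0 : 0 < κ := by positivity
      have hκu : κ ≤ u := by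
        have h4u : 4/u < m := lt_of_le_of_lt (le_max_left _ _) hm
        rw [div_lt_iff₀ hu0] at h4u
        rw [hκdef, div_le_iff₀ hden]
        nlinarith
      have hmem : κ ∈ Set.Ioc (0:ℝ) (8/3) := by
        refine ⟨κ0, ?_⟩
        rw [hκdef, div_le_iff₀ hden]
        nlinarith
      have hcosval : Real.cos (4 * Real.pi / κ) = -1 := by
        have harg : 4 * Real.pi / κ = m * (2 * Real.pi) + Real.pi := by
          rw [hκdef]; field_simp
        rw [harg, Real.cos_nat_mul_two_pi_add_pi]
      have hc : Real.cos (4 * Real.pi / κ) ≤ 0 := by rw [hcosval]; norm_num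
      exact ⟨κ, hsub ⟨κ0, hκu⟩, le_of_eq (hζnonpos κ hmem hc)⟩
    · -- 0 ≤ liminf
      exact Filter.le_liminf_of_le hcob_ge hlb
end

section
/- For every κ ∈ (0,8) and every z ∈ (0,1), the series ∑_{n=0}^∞ ((4/κ)_n (1−4/κ)_n / ((8/κ)_n · n!)) z^n converges and its sum is strictly positive, i.e. ₂F₁(4/κ, 1−4/κ, 8/κ; z) > 0. Consequently, Z_a^(κ)(x) > 0 and Z_b^(κ)(x) > 0 for all x₁ < x₂ < x₃ < x₄. -/
namespace S19

lemma rf_zero (q : ℝ) : risingFac q 0 = 1 := by simp [risingFac]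

lemma rf_succ (q : ℝ) (n : ℕ) : risingFac q (n+1) = risingFac q n * (q + n) := by
  simp [risingFac, Finset.prod_range_succ]

lemma rf_pos {q : ℝ} (hq : 0 < q) (n : ℕ) : 0 < risingFac q n := by
  induction n with
  | zero => simp [rf_zero]
  | succ n ih => rw [rf_succ]; positivity

lemma rf_abs_le {x y : ℝ} (h : ∀ i : ℕ, |x + i| ≤ y + i) (n : ℕ) :
    |risingFac x n| ≤ risingFac y n := by
  induction n with
  | zero => simp [rf_zero]
  | succ n ih =>
      rw [rf_succ, rf_succ, abs_mul]
      have h0 : (0:ℝ) ≤ y + n := le_trans (abs_nonneg _) (h n)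
      exact mul_le_mul ih (h n) (abs_nonneg _) (le_trans (abs_nonneg _) ih)

/-- coefficients of ₂F₁(a, 1-a; 2a; ·) -/
noncomputable def coT (a : ℝ) (n : ℕ) : ℝ :=
  risingFac a n * risingFac (1-a) n / (risingFac (2*a) n * (Nat.factorial n : ℝ))

/-- coefficients of (1-z)^{-(2a-1)} -/
noncomputable def coE (a : ℝ) (n : ℕ) : ℝ := risingFac (2*a-1) n / (Nat.factorial n : ℝ)

/-- coefficients of ₂F₁(a, 3a-1; 2a; ·) -/
noncomputable def coS (a : ℝ) (n : ℕ) : ℝ :=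
  risingFac a n * risingFac (3*a-1) n / (risingFac (2*a) n * (Nat.factorial n : ℝ))

variable {a : ℝ}

lemma coT_zero : coT a 0 = 1 := by simp [coT, rf_zero]
lemma coE_zero : coE a 0 = 1 := by simp [coE, rf_zero]
lemma coS_zero : coS a 0 = 1 := by simp [coS, rf_zero]

lemma ha' (ha : 1/2 < a) : 0 < a := by linarith
lemma h2a (ha : 1/2 < a) : 0 < 2*a := by linarith
lemma h2a1 (ha : 1/2 < a) : 0 < 2*a - 1 := by linarith
lemma h3a1 (ha : 1/2 < a) : 0 < 3*a - 1 := by linarith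

lemma coE_pos (ha : 1/2 < a) (n : ℕ) : 0 < coE a n := by
  have := rf_pos (h2a1 ha) n
  have : (0:ℝ) < (Nat.factorial n : ℝ) := by positivity
  unfold coE; positivity

lemma coS_pos (ha : 1/2 < a) (n : ℕ) : 0 < coS a n := by
  have h1 := rf_pos (ha' ha) n
  have h2 := rf_pos (h3a1 ha) n
  have h3 := rf_pos (h2a ha) n
  have h4 : (0:ℝ) < (Nat.factorial n : ℝ) := by positivity
  unfold coS; positivity

lemma coT_succ (ha : 1/2 < a) (n : ℕ) :
    coT a (n+1) = coT a n * ((a+n)*(1-a+n)/((2*a+n)*(n+1))) := by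
  have h3 := (rf_pos (h2a ha) n).ne'
  have h4 : ((Nat.factorial n : ℝ)) ≠ 0 := by positivity
  have h5 : (2*a + n) ≠ 0 := by have := h2a ha; positivity
  have h6 : ((n:ℝ)+1) ≠ 0 := by positivity
  unfold coT
  rw [rf_succ, rf_succ, rf_succ, Nat.factorial_succ]
  push_cast
  field_simp

lemma coE_succ (n : ℕ) :
    coE a (n+1) = coE a n * ((2*a-1+n)/(n+1)) := by
  have h4 : ((Nat.factorial n : ℝ)) ≠ 0 := by positivity
  have h6 : ((n:ℝ)+1) ≠ 0 := by positivity
  unfold coE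
  rw [rf_succ, Nat.factorial_succ]
  push_cast
  rw [div_mul_div_comm]
  ring

lemma coS_succ_mul (ha : 1/2 < a) (n : ℕ) :
    ((n:ℝ)+1)*(2*a+n) * coS a (n+1) = (a+n)*(3*a-1+n) * coS a n := by
  have h3 := (rf_pos (h2a ha) n).ne'
  have h4 : ((Nat.factorial n : ℝ)) ≠ 0 := by positivity
  have h5 : (2*a + n) ≠ 0 := by have := h2a ha; positivity
  have h6 : ((n:ℝ)+1) ≠ 0 := by positivity
  unfold coS
  rw [rf_succ, rf_succ, rf_succ, Nat.factorial_succ]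
  push_cast
  field_simp

/-- WZ-style per-term identity. -/
lemma keyid (ha : 1/2 < a) (k m : ℕ) :
    (a+(k+m:ℕ))*(3*a-1+(k+m:ℕ)) * (coT a k * coE a m)
      - ((k+m:ℕ)+1)*(2*a+(k+m:ℕ)) * (coT a k * coE a (m+1))
    = ((k:ℝ)+1)*(2*a+k) * (coT a (k+1) * coE a m)
      - (k:ℝ)*(2*a-1+k) * (coT a k * coE a (m+1)) := by
  rw [coT_succ ha, coE_succ]
  have h5 : (2*a + k) ≠ 0 := by have := h2a ha; positivity
  have h6 : ((k:ℝ)+1) ≠ 0 := by positivity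
  have h7 : ((m:ℝ)+1) ≠ 0 := by positivity
  push_cast
  field_simp
  ring
lemma conv (ha : 1/2 < a) (n : ℕ) :
    ∑ k ∈ Finset.range (n+1), coT a k * coE a (n-k) = coS a n := by
  induction n with
  | zero => simp [coT_zero, coE_zero, coS_zero]
  | succ n ih =>
    set G : ℕ → ℝ := fun j => (j:ℝ)*(2*a-1+j) * (coT a j * coE a (n+1-j)) with hGdef
    have step : ∀ k ∈ Finset.range (n+1),
        (a+(n:ℝ))*(3*a-1+(n:ℝ)) * (coT a k * coE a (n-k))
          = ((n:ℝ)+1)*(2*a+(n:ℝ)) * (coT a k * coE a (n+1-k)) + (G (k+1) - G k) := by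
      intro k hk
      have hkn : k ≤ n := Nat.lt_succ_iff.mp (Finset.mem_range.mp hk)
      have h1 : k + (n - k) = n := by omega
      have h2 : n + 1 - k = (n - k) + 1 := by omega
      have h3 : n + 1 - (k+1) = n - k := by omega
      have hk0 := keyid ha k (n-k)
      rw [h1] at hk0
      simp only [hGdef, h2, h3]
      push_cast
      push_cast at hk0
      linear_combination hk0
    have hmul : (a+(n:ℝ))*(3*a-1+(n:ℝ)) * coS a n
        = ((n:ℝ)+1)*(2*a+(n:ℝ)) * (∑ k ∈ Finset.range (n+1), coT a k * coE a (n+1-k))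
          + (G (n+1) - G 0) := by
      rw [← ih, Finset.mul_sum, Finset.mul_sum, ← Finset.sum_range_sub G,
        ← Finset.sum_add_distrib]
      exact Finset.sum_congr rfl step
    have hG0 : G 0 = 0 := by simp [hGdef]
    have hGn : G (n+1) = ((n:ℝ)+1)*(2*a+(n:ℝ)) * coT a (n+1) := by
      simp only [hGdef, Nat.sub_self, coE_zero]
      push_cast
      ring
    have hsplit : ∑ k ∈ Finset.range (n+2), coT a k * coE a (n+1-k)
        = (∑ k ∈ Finset.range (n+1), coT a k * coE a (n+1-k)) + coT a (n+1) * coE a 0 := by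
      rw [Finset.sum_range_succ, Nat.sub_self]
    have hpos : ((n:ℝ)+1)*(2*a+(n:ℝ)) ≠ 0 := by
      have := h2a ha
      positivity
    apply mul_left_cancel₀ hpos
    have hc := coS_succ_mul ha n
    rw [hG0, hGn, sub_zero] at hmul
    rw [coE_zero, mul_one] at hsplit
    linear_combination (((n:ℝ)+1)*(2*a+(n:ℝ))) * hsplit - hmul - hc
/-- factor `1 - c_i` -/
noncomputable def cfac (a : ℝ) (i : ℕ) : ℝ := 1 - (a*a - a)/((2*a+i)*(2*a-1+i))

lemma cfac_pos (ha : 1/2 < a) (i : ℕ) : 0 < cfac a i := by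
  have h1 : (0:ℝ) < 2*a + i := by have := h2a ha; positivity
  have h2 : (0:ℝ) < 2*a - 1 + i := by have := h2a1 ha; positivity
  have hD : (0:ℝ) < (2*a+i)*(2*a-1+i) := mul_pos h1 h2
  have hlt : a*a - a < (2*a+i)*(2*a-1+i) := by nlinarith [sq_nonneg (a : ℝ), Nat.cast_nonneg (α := ℝ) i]
  have := (div_lt_one hD).mpr hlt
  unfold cfac; linarith

lemma prodform (ha : 1/2 < a) (n : ℕ) :
    coS a n = (∏ i ∈ Finset.range n, cfac a i) * coE a n := by
  induction n with
  | zero => simp [coS_zero, coE_zero]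
  | succ n ih =>
    have h5 : (2*a + (n:ℝ)) ≠ 0 := by have := h2a ha; positivity
    have h51 : (2*a - 1 + (n:ℝ)) ≠ 0 := by have := h2a1 ha; positivity
    have h6 : ((n:ℝ)+1) ≠ 0 := by positivity
    have hS : coS a (n+1) = ((a+(n:ℝ))*(3*a-1+(n:ℝ))/((2*a+(n:ℝ))*((n:ℝ)+1))) * coS a n := by
      have h := coS_succ_mul ha n
      field_simp
      linear_combination h
    have hc : cfac a n = ((a+n)*(3*a-1+n)) / ((2*a+n)*(2*a-1+n)) := by
      unfold cfac
      rw [eq_div_iff (mul_ne_zero h5 h51), sub_mul, div_mul_cancel₀ _ (mul_ne_zero h5 h51)]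
      ring
    have key : (a+(n:ℝ))*(3*a-1+(n:ℝ))/((2*a+(n:ℝ))*((n:ℝ)+1))
        = (a+(n:ℝ))*(3*a-1+(n:ℝ))/((2*a+(n:ℝ))*(2*a-1+(n:ℝ))) * ((2*a-1+(n:ℝ))/((n:ℝ)+1)) := by
      rw [div_mul_div_comm, mul_right_comm (2*a+(n:ℝ)) (2*a-1+(n:ℝ)) ((n:ℝ)+1),
        mul_div_mul_right _ _ h51]
    rw [hS, ih, Finset.prod_range_succ, coE_succ, hc, key]
    ring

/-- Weierstrass product inequality. -/
lemma weier (x : ℕ → ℝ) (h0 : ∀ j, 0 ≤ x j) (h1 : ∀ j, x j ≤ 1) (m : ℕ) :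
    1 - ∑ j ∈ Finset.range m, x j ≤ ∏ j ∈ Finset.range m, (1 - x j) := by
  induction m with
  | zero => simp
  | succ m ih =>
    rw [Finset.sum_range_succ, Finset.prod_range_succ]
    have hP : (0:ℝ) ≤ ∑ j ∈ Finset.range m, x j :=
      Finset.sum_nonneg fun j _ => h0 j
    nlinarith [h0 m, h1 m, ih, hP]

lemma prod_lower (ha : 1/2 < a) : ∃ δ : ℝ, 0 < δ ∧
    ∀ n, δ ≤ ∏ i ∈ Finset.range n, cfac a i := by
  rcases le_or_gt a 1 with hle | hgt
  · refine ⟨1, one_pos, fun n => ?_⟩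
    have key : ∀ i : ℕ, 1 ≤ cfac a i := by
      intro i
      have h1 : (0:ℝ) < 2*a + i := by have := h2a ha; positivity
      have h2 : (0:ℝ) < 2*a - 1 + i := by have := h2a1 ha; positivity
      have hd : a*a - a ≤ 0 := by nlinarith
      have : (a*a - a)/((2*a+i)*(2*a-1+i)) ≤ 0 :=
        div_nonpos_of_nonpos_of_nonneg hd (le_of_lt (mul_pos h1 h2))
      unfold cfac; linarith
    induction n with
    | zero => simp
    | succ n ih =>
        rw [Finset.prod_range_succ]
        nlinarith [key n, ih]
  · -- a > 1
    set d : ℝ := a*a - a with hd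
    have hdpos : 0 < d := by nlinarith
    set i₀ : ℕ := ⌈2*d⌉₊ with hi₀
    have hi₀d : 2*d ≤ (i₀:ℝ) := Nat.le_ceil _
    have hP₀ : (0:ℝ) < ∏ i ∈ Finset.range i₀, cfac a i :=
      Finset.prod_pos fun i _ => cfac_pos ha i
    refine ⟨(∏ i ∈ Finset.range i₀, cfac a i)/2, by positivity, fun n => ?_⟩
    have hcle1 : ∀ i : ℕ, cfac a i ≤ 1 := by
      intro i
      have h1 : (0:ℝ) < 2*a + i := by have := h2a ha; positivity
      have h2 : (0:ℝ) < 2*a - 1 + i := by have := h2a1 ha; positivity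
      have : 0 ≤ d/((2*a+i)*(2*a-1+i)) := by positivity
      unfold cfac; rw [← hd]; linarith
    rcases le_or_gt n i₀ with hn | hn
    · -- n ≤ i₀ : ∏_{i<i₀} ≤ ∏_{i<n}
      have : ∏ i ∈ Finset.range i₀, cfac a i ≤ ∏ i ∈ Finset.range n, cfac a i := by
        obtain ⟨m, hm⟩ := Nat.exists_eq_add_of_le hn
        rw [hm, Finset.prod_range_add]
        have h1 : ∏ i ∈ Finset.range m, cfac a (n + i) ≤ 1 :=
          Finset.prod_le_one (fun i _ => le_of_lt (cfac_pos ha _)) (fun i _ => hcle1 _)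
        nlinarith [Finset.prod_pos (fun i (_ : i ∈ Finset.range n) => cfac_pos ha i)]
      linarith
    · obtain ⟨m, rfl⟩ := Nat.exists_eq_add_of_le (le_of_lt hn)
      rw [Finset.prod_range_add]
      have htail : 1/2 ≤ ∏ j ∈ Finset.range m, cfac a (i₀ + j) := by
        have hsum : ∑ j ∈ Finset.range m, d/((2*a+(i₀+j:ℕ))*(2*a-1+(i₀+j:ℕ))) ≤ 1/2 := by
          have htel : ∀ j : ℕ, d/((2*a+(i₀+j:ℕ))*(2*a-1+(i₀+j:ℕ)))
              = d/(2*a-1+(i₀:ℝ)+(j:ℕ)) - d/(2*a-1+(i₀:ℝ)+((j+1:ℕ):ℝ)) := by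
            intro j
            have h1 : (0:ℝ) < 2*a - 1 + (i₀:ℝ) + j := by have := h2a1 ha; positivity
            have h2 : (0:ℝ) < 2*a - 1 + (i₀:ℝ) + (j+1:ℝ) := by have := h2a1 ha; positivity
            have h3 : (0:ℝ) < 2*a + ((i₀:ℝ)+(j:ℝ)) := by have := h2a ha; positivity
            have h4 : (0:ℝ) < 2*a - 1 + ((i₀:ℝ)+(j:ℝ)) := by have := h2a1 ha; positivity
            push_cast
            rw [div_sub_div _ _ (by linarith) (by linarith)]
            rw [div_eq_div_iff (by nlinarith) (by nlinarith)]
            ring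
          rw [Finset.sum_congr rfl (fun j _ => htel j)]
          rw [Finset.sum_range_sub' (fun j : ℕ => d/(2*a-1+(i₀:ℝ)+(j:ℕ)))]
          have h1 : (0:ℝ) < 2*a - 1 + i₀ := by have := h2a1 ha; positivity
          have h2 : (0:ℝ) < 2*a - 1 + i₀ + m := by have := h2a1 ha; positivity
          have hle : d/(2*a-1+(i₀:ℝ)+((0:ℕ):ℝ)) ≤ 1/2 := by
            push_cast
            rw [div_le_iff₀ (by linarith)]
            linarith
          have h3 : 0 ≤ d/(2*a-1+(i₀:ℝ)+((m:ℕ):ℝ)) := by positivity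
          push_cast
          push_cast at hle h3
          linarith
        have hw := weier (fun j => d/((2*a+(i₀+j:ℕ))*(2*a-1+(i₀+j:ℕ))))
          (fun j => by
            have h3 : (0:ℝ) < 2*a + (i₀+j:ℕ) := by have := h2a ha; positivity
            have h4 : (0:ℝ) < 2*a - 1 + (i₀+j:ℕ) := by have := h2a1 ha; positivity
            positivity)
          (fun j => by
            have hc := cfac_pos ha (i₀ + j)
            unfold cfac at hc
            rw [← hd] at hc
            push_cast at hc ⊢
            linarith) m
        have heq : ∀ j ∈ Finset.range m, (1 - d/((2*a+(i₀+j:ℕ))*(2*a-1+(i₀+j:ℕ)))) = cfac a (i₀+j) := by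
          intro j _
          unfold cfac
          rw [← hd]
        rw [Finset.prod_congr rfl heq] at hw
        linarith
      nlinarith [hP₀, htail]

lemma delta_bound (ha : 1/2 < a) : ∃ δ : ℝ, 0 < δ ∧ ∀ n, δ * coE a n ≤ coS a n := by
  obtain ⟨δ, hδ, h⟩ := prod_lower ha
  exact ⟨δ, hδ, fun n => by
    rw [prodform ha n]
    exact mul_le_mul_of_nonneg_right (h n) (le_of_lt (coE_pos ha n))⟩
lemma coS_succ (ha : 1/2 < a) (n : ℕ) :
    coS a (n+1) = coS a n * ((a+(n:ℝ))*(3*a-1+(n:ℝ))/((2*a+(n:ℝ))*((n:ℝ)+1))) := by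
  have h := coS_succ_mul ha n
  have h5 : (2*a + (n:ℝ)) ≠ 0 := by have := h2a ha; positivity
  have h6 : ((n:ℝ)+1) ≠ 0 := by positivity
  field_simp
  linear_combination h

lemma ratio_ineq {b z : ℝ} (hb : 0 < b) (hz0 : 0 < z) (hz1 : z < 1) {n : ℕ}
    (hn : 4*b/(1-z) ≤ (n:ℝ)) : z*(b+(n:ℝ)) ≤ (1+z)/2*((n:ℝ)+1) := by
  have h1 : (0:ℝ) < 1 - z := by linarith
  rw [div_le_iff₀ h1] at hn
  nlinarith

lemma summable_coE_z (ha : 1/2 < a) {z : ℝ} (hz0 : 0 < z) (hz1 : z < 1) :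
    Summable (fun n => |coE a n * z^n|) := by
  apply summable_of_ratio_norm_eventually_le (r := (1+z)/2) (by linarith)
  rw [Filter.eventually_atTop]
  refine ⟨⌈4*(2*a-1)/(1-z)⌉₊, fun n hn => ?_⟩
  have hcast : 4*(2*a-1)/(1-z) ≤ (n:ℝ) := le_trans (Nat.le_ceil _) (Nat.cast_le.mpr hn)
  have hkey := ratio_ineq (h2a1 ha) hz0 hz1 hcast
  have hE := coE_pos ha n
  have hE1 := coE_pos ha (n+1)
  have hzn : (0:ℝ) < z^n := by positivity
  have h2a1n : (0:ℝ) < 2*a-1+(n:ℝ) := by have := h2a1 ha; positivity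
  simp only [Real.norm_eq_abs, abs_abs, abs_of_pos (mul_pos hE1 (by positivity : (0:ℝ) < z^(n+1))),
    abs_of_pos (mul_pos hE hzn)]
  have hstep : (2*a-1+(n:ℝ))/((n:ℝ)+1) * z ≤ (1+z)/2 := by
    rw [div_mul_eq_mul_div, div_le_iff₀ (by positivity)]
    nlinarith
  calc coE a (n+1) * z^(n+1) = (coE a n * z^n) * ((2*a-1+(n:ℝ))/((n:ℝ)+1) * z) := by
        rw [coE_succ, pow_succ]; push_cast; ring
    _ ≤ (coE a n * z^n) * ((1+z)/2) := by
        apply mul_le_mul_of_nonneg_left hstep (le_of_lt (mul_pos hE hzn))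
    _ = (1+z)/2 * (coE a n * z^n) := by ring

lemma summable_coS_z (ha : 1/2 < a) {z : ℝ} (hz0 : 0 < z) (hz1 : z < 1) :
    Summable (fun n => |coS a n * z^n|) := by
  apply summable_of_ratio_norm_eventually_le (r := (1+z)/2) (by linarith)
  rw [Filter.eventually_atTop]
  refine ⟨⌈4*(3*a-1)/(1-z)⌉₊, fun n hn => ?_⟩
  have hcast : 4*(3*a-1)/(1-z) ≤ (n:ℝ) := le_trans (Nat.le_ceil _) (Nat.cast_le.mpr hn)
  have hkey := ratio_ineq (h3a1 ha) hz0 hz1 hcast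
  have hS := coS_pos ha n
  have hS1 := coS_pos ha (n+1)
  have hzn : (0:ℝ) < z^n := by positivity
  have hap : (0:ℝ) < a + (n:ℝ) := by have := ha' ha; positivity
  have h2ap : (0:ℝ) < 2*a + (n:ℝ) := by have := h2a ha; positivity
  have h3ap : (0:ℝ) < 3*a-1+(n:ℝ) := by have := h3a1 ha; positivity
  simp only [Real.norm_eq_abs, abs_abs, abs_of_pos (mul_pos hS1 (by positivity : (0:ℝ) < z^(n+1))),
    abs_of_pos (mul_pos hS hzn)]
  have hstep : (a+(n:ℝ))*(3*a-1+(n:ℝ))/((2*a+(n:ℝ))*((n:ℝ)+1)) * z ≤ (1+z)/2 := by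
    rw [div_mul_eq_mul_div, div_le_iff₀ (by positivity)]
    have h1 : (a+(n:ℝ))*(z*(3*a-1+(n:ℝ))) ≤ (a+(n:ℝ))*((1+z)/2*((n:ℝ)+1)) :=
      mul_le_mul_of_nonneg_left hkey (le_of_lt hap)
    have h2 : (a+(n:ℝ))*((1+z)/2*((n:ℝ)+1)) ≤ (2*a+(n:ℝ))*((1+z)/2*((n:ℝ)+1)) :=
      mul_le_mul_of_nonneg_right (by have := ha' ha; linarith) (by positivity)
    nlinarith
  calc coS a (n+1) * z^(n+1)
      = (coS a n * z^n) * ((a+(n:ℝ))*(3*a-1+(n:ℝ))/((2*a+(n:ℝ))*((n:ℝ)+1)) * z) := by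
        rw [coS_succ ha, pow_succ]; ring
    _ ≤ (coS a n * z^n) * ((1+z)/2) := by
        apply mul_le_mul_of_nonneg_left hstep (le_of_lt (mul_pos hS hzn))
    _ = (1+z)/2 * (coS a n * z^n) := by ring

lemma summable_coT_z (ha : 1/2 < a) {z : ℝ} (hz0 : 0 < z) (hz1 : z < 1) :
    Summable (fun n => |coT a n * z^n|) := by
  apply summable_of_ratio_norm_eventually_le (r := z) hz1
  rw [Filter.eventually_atTop]
  refine ⟨⌈a⌉₊, fun n hn => ?_⟩
  have hcast : a ≤ (n:ℝ) := le_trans (Nat.le_ceil _) (Nat.cast_le.mpr hn)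
  have hap : (0:ℝ) < a + (n:ℝ) := by have := ha' ha; positivity
  have h2ap : (0:ℝ) < 2*a + (n:ℝ) := by have := h2a ha; positivity
  have h1an : (0:ℝ) ≤ 1 - a + (n:ℝ) := by linarith
  have hfac : (a+(n:ℝ))*(1-a+(n:ℝ))/((2*a+(n:ℝ))*((n:ℝ)+1)) ≤ 1 := by
    rw [div_le_one (by positivity)]
    nlinarith [ha' ha]
  have hfacnn : (0:ℝ) ≤ (a+(n:ℝ))*(1-a+(n:ℝ))/((2*a+(n:ℝ))*((n:ℝ)+1)) := by positivity
  simp only [Real.norm_eq_abs, abs_abs]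
  calc |coT a (n+1) * z^(n+1)|
      = |coT a n * z^n| * ((a+(n:ℝ))*(1-a+(n:ℝ))/((2*a+(n:ℝ))*((n:ℝ)+1))) * z := by
        rw [coT_succ ha, pow_succ, abs_mul, abs_mul, abs_mul, abs_mul,
          abs_of_nonneg hfacnn, abs_of_pos hz0, abs_of_nonneg (le_of_lt (by positivity : (0:ℝ) < z^n))]
        ring
    _ ≤ |coT a n * z^n| * 1 * z := by
        apply mul_le_mul_of_nonneg_right _ (le_of_lt hz0)
        exact mul_le_mul_of_nonneg_left hfac (abs_nonneg _)
    _ = z * |coT a n * z^n| := by ring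
/-- majorant coefficients -/
noncomputable def coU (a : ℝ) (n : ℕ) : ℝ :=
  risingFac a n * risingFac (max |1-a| (1/2)) n / (risingFac (2*a) n * (Nat.factorial n : ℝ))

lemma hq_pos (ha : 1/2 < a) : 0 < max |1-a| (1/2) := lt_of_lt_of_le one_half_pos (le_max_right _ _)

lemma hq_lt (ha : 1/2 < a) : max |1-a| (1/2) < a := by
  apply max_lt _ ha
  rw [abs_lt]
  constructor <;> linarith

lemma coU_pos (ha : 1/2 < a) (n : ℕ) : 0 < coU a n := by
  have h1 := rf_pos (ha' ha) n
  have h2 := rf_pos (hq_pos ha) n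
  have h3 := rf_pos (h2a ha) n
  have h4 : (0:ℝ) < (Nat.factorial n : ℝ) := by positivity
  unfold coU; positivity

lemma coT_abs_le_coU (ha : 1/2 < a) (n : ℕ) : |coT a n| ≤ coU a n := by
  have h1 := rf_pos (ha' ha) n
  have h3 := rf_pos (h2a ha) n
  have h4 : (0:ℝ) < (Nat.factorial n : ℝ) := by positivity
  have habs : |risingFac (1-a) n| ≤ risingFac (max |1-a| (1/2)) n := by
    apply rf_abs_le
    intro i
    calc |1 - a + (i:ℝ)| ≤ |1-a| + |(i:ℝ)| := abs_add_le _ _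
      _ ≤ max |1-a| (1/2) + (i:ℝ) := by
          rw [Nat.abs_cast]
          exact add_le_add (le_max_left _ _) le_rfl
  unfold coT coU
  rw [abs_div, abs_mul, abs_of_pos h1, abs_of_pos (mul_pos h3 h4)]
  exact div_le_div_of_nonneg_right
    (mul_le_mul_of_nonneg_left habs (le_of_lt h1)) (mul_pos h3 h4).le

lemma coU_succ (ha : 1/2 < a) (n : ℕ) :
    coU a (n+1) = coU a n * ((a+(n:ℝ))*(max |1-a| (1/2)+(n:ℝ))/((2*a+(n:ℝ))*((n:ℝ)+1))) := by
  have h3 := (rf_pos (h2a ha) n).ne'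
  have h4 : ((Nat.factorial n : ℝ)) ≠ 0 := by positivity
  have h5 : (2*a + (n:ℝ)) ≠ 0 := by have := h2a ha; positivity
  have h6 : ((n:ℝ)+1) ≠ 0 := by positivity
  unfold coU
  rw [rf_succ, rf_succ, rf_succ, Nat.factorial_succ]
  push_cast
  field_simp

lemma summable_coU (ha : 1/2 < a) : Summable (coU a) := by
  set q : ℝ := max |1-a| (1/2) with hqdef
  have hq0 : 0 < q := hq_pos ha
  have hqa : q < a := hq_lt ha
  set C : ℝ := 2*(2*a+1)/(a-q) with hCdef
  set w : ℕ → ℝ := fun n => (n:ℝ) * coU a n with hwdef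
  set N : ℕ := max 1 ⌈2*q*a/(a-q)⌉₊ with hNdef
  have hkey : ∀ j : ℕ, coU a (N+j) ≤ C * (w (N+j) - w (N+(j+1))) := by
    intro j
    show coU a (N+j) ≤ C * (w (N+j) - w ((N+j)+1))
    set n : ℕ := N + j with hndef
    have hn1 : 1 ≤ n := le_trans (le_max_left _ _) (Nat.le_add_right N j)
    have hn1' : (1:ℝ) ≤ (n:ℝ) := by exact_mod_cast hn1
    have hnq : 2*q*a/(a-q) ≤ (n:ℝ) := by
      refine le_trans (Nat.le_ceil _) ?_
      exact_mod_cast le_trans (le_max_right 1 _) (Nat.le_add_right N j)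
    have hnq' : 2*q*a ≤ (n:ℝ)*(a-q) := by
      rw [div_le_iff₀ (by linarith)] at hnq
      linarith [hnq]
    have hU := coU_pos ha n
    have h5 : (0:ℝ) < 2*a + (n:ℝ) := by have := h2a ha; positivity
    have hweq : w n - w (n+1) = coU a n * (((n:ℝ)*(a-q) - a*q)/(2*a+(n:ℝ))) := by
      simp only [hwdef]
      rw [coU_succ ha n, ← hqdef]
      push_cast
      field_simp
      ring
    rw [hweq]
    have haq : (0:ℝ) < a - q := by linarith
    have hX : 1 ≤ C * (((n:ℝ)*(a-q) - a*q)/(2*a+(n:ℝ))) := by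
      rw [hCdef, div_mul_div_comm, le_div_iff₀ (by positivity)]
      nlinarith [mul_nonneg (by linarith : (0:ℝ) ≤ 2*a+1) (by linarith : (0:ℝ) ≤ (n:ℝ)*(a-q) - 2*a*q),
        mul_nonneg (mul_nonneg (by linarith : (0:ℝ) ≤ 2*a) haq.le) (by linarith : (0:ℝ) ≤ (n:ℝ)-1)]
    calc coU a n = 1 * coU a n := (one_mul _).symm
      _ ≤ (C * (((n:ℝ)*(a-q) - a*q)/(2*a+(n:ℝ)))) * coU a n :=
          mul_le_mul_of_nonneg_right hX hU.le
      _ = C * (coU a n * (((n:ℝ)*(a-q) - a*q)/(2*a+(n:ℝ)))) := by ring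
  have hw0 : ∀ m : ℕ, 0 ≤ w m := fun m => mul_nonneg (Nat.cast_nonneg m) (le_of_lt (coU_pos ha m))
  have hshift : Summable (fun j => coU a (N+j)) := by
    apply summable_of_sum_range_le (c := C * w N)
      (fun j => le_of_lt (coU_pos ha _))
    intro m
    have hts : ∑ j ∈ Finset.range m, (w (N+j) - w (N+(j+1))) = w (N+0) - w (N+m) :=
      Finset.sum_range_sub' (fun j => w (N+j)) m
    simp only [Nat.add_zero] at hts
    calc ∑ j ∈ Finset.range m, coU a (N+j)
        ≤ ∑ j ∈ Finset.range m, C * (w (N+j) - w (N+(j+1))) :=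
          Finset.sum_le_sum fun j _ => hkey j
      _ = C * ∑ j ∈ Finset.range m, (w (N+j) - w (N+(j+1))) := by
          rw [← Finset.mul_sum]
      _ = C * (w N - w (N+m)) := by rw [hts]
      _ ≤ C * w N := by
          have hC : 0 ≤ C := by
            rw [hCdef]
            have h1 : 0 < a - q := by linarith
            positivity
          nlinarith [hw0 (N+m)]
  have heq : (fun j : ℕ => coU a (j+N)) = (fun j : ℕ => coU a (N+j)) :=
    funext fun j => by rw [Nat.add_comm]
  exact (summable_nat_add_iff N).mp (by rw [heq]; exact hshift)

lemma summable_coT_abs (ha : 1/2 < a) : Summable (fun n => |coT a n|) :=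
  Summable.of_nonneg_of_le (fun n => abs_nonneg _) (coT_abs_le_coU ha) (summable_coU ha)

lemma summable_coT_one (ha : 1/2 < a) : Summable (coT a) :=
  summable_abs_iff.mp (summable_coT_abs ha)
lemma hyp_ge_delta (ha : 1/2 < a) : ∃ δ : ℝ, 0 < δ ∧
    (∀ z : ℝ, 0 < z → z < 1 →
      Summable (fun n => coT a n * z^n) ∧ δ ≤ ∑' n, coT a n * z^n) ∧
    δ ≤ ∑' n, coT a n * 1^n := by
  obtain ⟨δ, hδ0, hδ⟩ := delta_bound ha
  have hmain : ∀ z : ℝ, 0 < z → z < 1 →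
      Summable (fun n => coT a n * z^n) ∧ δ ≤ ∑' n, coT a n * z^n := by
    intro z hz0 hz1
    have hT := summable_coT_z ha hz0 hz1
    have hE := summable_coE_z ha hz0 hz1
    have hS := summable_coS_z ha hz0 hz1
    have hT' : Summable fun n => ‖coT a n * z^n‖ := by
      simpa only [Real.norm_eq_abs] using hT
    have hE' : Summable fun n => ‖coE a n * z^n‖ := by
      simpa only [Real.norm_eq_abs] using hE
    have hTs : Summable fun n => coT a n * z^n := hT'.of_norm
    have hEs : Summable fun n => coE a n * z^n := hE'.of_norm
    have hSs : Summable fun n => coS a n * z^n :=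
      (show Summable fun n => ‖coS a n * z^n‖ by simpa only [Real.norm_eq_abs] using hS).of_norm
    refine ⟨hTs, ?_⟩
    have hprod := tsum_mul_tsum_eq_tsum_sum_range_of_summable_norm hT' hE'
    have hconv : ∀ n : ℕ, ∑ k ∈ Finset.range (n+1),
        (coT a k * z^k) * (coE a (n-k) * z^(n-k)) = coS a n * z^n := by
      intro n
      rw [← conv ha n, Finset.sum_mul]
      apply Finset.sum_congr rfl
      intro k hk
      have hkn : k ≤ n := Nat.lt_succ_iff.mp (Finset.mem_range.mp hk)
      have hzz : z^k * z^(n-k) = z^n := by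
        rw [← pow_add]
        congr 1
        omega
      calc (coT a k * z^k) * (coE a (n-k) * z^(n-k))
          = coT a k * coE a (n-k) * (z^k * z^(n-k)) := by ring
        _ = coT a k * coE a (n-k) * z^n := by rw [hzz]
    rw [tsum_congr hconv] at hprod
    have hE1 : (1:ℝ) ≤ ∑' n, coE a n * z^n := by
      have h0 : coE a 0 * z^0 = 1 := by simp [coE_zero]
      rw [← h0]
      exact Summable.le_tsum hEs 0 fun j _ =>
        mul_nonneg (coE_pos ha j).le (pow_nonneg hz0.le j)
    have hdE : δ * (∑' n, coE a n * z^n) ≤ ∑' n, coS a n * z^n := by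
      rw [← tsum_mul_left]
      refine Summable.tsum_le_tsum (fun n => ?_) (hEs.mul_left δ) hSs
      calc δ * (coE a n * z^n) = (δ * coE a n) * z^n := by ring
        _ ≤ coS a n * z^n := mul_le_mul_of_nonneg_right (hδ n) (pow_nonneg hz0.le n)
    have hEpos : (0:ℝ) < ∑' n, coE a n * z^n := lt_of_lt_of_le one_pos hE1
    have hfin : δ * (∑' n, coE a n * z^n)
        ≤ (∑' n, coT a n * z^n) * (∑' n, coE a n * z^n) := by
      rw [hprod]; exact hdE
    exact le_of_mul_le_mul_right hfin hEpos
  refine ⟨δ, hδ0, hmain, ?_⟩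
  have hsm := summable_coT_one ha
  have habel := Real.tendsto_tsum_powerSeries_nhdsWithin_lt (f := coT a)
    hsm.hasSum.tendsto_sum_nat
  have h1 : δ ≤ ∑' n, coT a n := by
    apply ge_of_tendsto habel
    filter_upwards [Ioo_mem_nhdsLT (zero_lt_one : (0:ℝ) < 1)]
      with z hz
    exact (hmain z hz.1 hz.2).2
  calc δ ≤ ∑' n, coT a n := h1
    _ = ∑' n, coT a n * 1^n := by simp

end S19

open S19

/-- for `κ ∈ (0,8)` and `z ∈ (0,1)`, the hypergeometric series
`∑ (4/κ)ₙ(1−4/κ)ₙ/((8/κ)ₙ n!) zⁿ` converges with strictly positive sum;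
consequently `Z_a^(κ) > 0` and `Z_b^(κ) > 0` on the chamber `x₁ < x₂ < x₃ < x₄`. -/
theorem statement19 (κ : ℝ) (hκ : κ ∈ Set.Ioo (0:ℝ) 8) :
    (∀ z ∈ Set.Ioo (0:ℝ) 1,
      Summable (fun n : ℕ =>
        risingFac (4/κ) n * risingFac (1 - 4/κ) n /
          (risingFac (8/κ) n * (Nat.factorial n : ℝ)) * z ^ n) ∧
      0 < hyp2F1 (4/κ) (1 - 4/κ) (8/κ) z) ∧
    ∀ x₁ x₂ x₃ x₄ : ℝ, x₁ < x₂ → x₂ < x₃ → x₃ < x₄ →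
      0 < Za κ x₁ x₂ x₃ x₄ ∧ 0 < Zb κ x₁ x₂ x₃ x₄ := by

  obtain ⟨hκ0, hκ8⟩ := hκ
  have ha : 1/2 < 4/κ := by
    rw [lt_div_iff₀ hκ0]
    linarith
  have h8 : (8:ℝ)/κ = 2*(4/κ) := by ring
  obtain ⟨δ, hδ0, hmain, hone⟩ := hyp_ge_delta ha
  have hcoT : ∀ z : ℝ, (fun n : ℕ =>
      risingFac (4/κ) n * risingFac (1 - 4/κ) n /
        (risingFac (8/κ) n * (Nat.factorial n : ℝ)) * z ^ n)
      = fun n => coT (4/κ) n * z^n := by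
    intro z
    funext n
    rw [h8]
    rfl
  have hhyp : ∀ z : ℝ, hyp2F1 (4/κ) (1 - 4/κ) (8/κ) z = ∑' n, coT (4/κ) n * z^n := by
    intro z
    unfold hyp2F1
    rw [hcoT z]
  have hz01 : ∀ z : ℝ, 0 < z → z < 1 → 0 < hyp2F1 (4/κ) (1 - 4/κ) (8/κ) z := by
    intro z h0 h1
    rw [hhyp z]
    exact lt_of_lt_of_le hδ0 (hmain z h0 h1).2
  have hat1 : 0 < hyp2F1 (4/κ) (1 - 4/κ) (8/κ) 1 := by
    rw [hhyp 1]
    exact lt_of_lt_of_le hδ0 hone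
  constructor
  · intro z hz
    refine ⟨?_, hz01 z hz.1 hz.2⟩
    rw [hcoT z]
    exact (hmain z hz.1 hz.2).1
  · intro x₁ x₂ x₃ x₄ h12 h23 h34
    have hnum : 0 < (x₂ - x₁) * (x₄ - x₃) := mul_pos (by linarith) (by linarith)
    have hden : 0 < (x₃ - x₁) * (x₄ - x₂) := mul_pos (by linarith) (by linarith)
    have hcr0 : 0 < crossRatio x₁ x₂ x₃ x₄ := div_pos hnum hden
    have hcr1 : crossRatio x₁ x₂ x₃ x₄ < 1 := by
      rw [crossRatio, div_lt_one hden]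
      nlinarith [mul_pos (show (0:ℝ) < x₄ - x₁ by linarith) (show (0:ℝ) < x₃ - x₂ by linarith)]
    constructor
    · unfold Za
      have h1 := Real.rpow_pos_of_pos (show (0:ℝ) < x₂ - x₁ by linarith) (-(2 * hParam κ))
      have h2 := Real.rpow_pos_of_pos (show (0:ℝ) < x₄ - x₃ by linarith) (-(2 * hParam κ))
      have h3 := Real.rpow_pos_of_pos (show (0:ℝ) < 1 - crossRatio x₁ x₂ x₃ x₄ by linarith) (2/κ)
      have h4 := hz01 (1 - crossRatio x₁ x₂ x₃ x₄) (by linarith) (by linarith)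
      exact mul_pos (mul_pos (mul_pos h1 h2) h3) (div_pos h4 hat1)
    · unfold Zb
      have h1 := Real.rpow_pos_of_pos (show (0:ℝ) < x₄ - x₁ by linarith) (-(2 * hParam κ))
      have h2 := Real.rpow_pos_of_pos (show (0:ℝ) < x₃ - x₂ by linarith) (-(2 * hParam κ))
      have h3 := Real.rpow_pos_of_pos hcr0 (2/κ)
      have h4 := hz01 (crossRatio x₁ x₂ x₃ x₄) hcr0 hcr1
      exact mul_pos (mul_pos (mul_pos h1 h2) h3) (div_pos h4 hat1)
end
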